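/- arXiv:2205.11210 — 2 statements merged into one kernel-verified Lean document; each statement's English description precedes it below -/
import Mathlib

section
/- Let (G_k,y) be a weakly reversible mass-action system and x* ∈ ℝ^n_{>0} a positive complex-balanced equilibrium. Then the set of all positive complex-balanced equilibria equals { x* ∘ e^v : v ∈ S^⊥ }, where ∘ denotes the componentwise product, e^v the componentwise exponential, and S^⊥ the orthogonal complement of the stoichiometric subspace S = im(Y I_E). -/
open Matrix BigOperators Finset

variable {V : Type*}

/-- Directed reachability in the digraph with edge set `F`. -/
def dReach (F : Finset (V × V)) : V → V → Prop :=
  Relation.ReflTransGen fun a b => (a, b) ∈ F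

/-- Reachability in the underlying undirected graph of the digraph with edge set `F`. -/
def uReach (F : Finset (V × V)) : V → V → Prop :=
  Relation.ReflTransGen fun a b => (a, b) ∈ F ∨ (b, a) ∈ F

/-- A digraph is strongly connected if every vertex reaches every other vertex. -/
def StronglyConnected (F : Finset (V × V)) : Prop :=
  ∀ i j : V, dReach F i j

/-- A simple digraph has no self-loops. -/
def NoSelfLoops (F : Finset (V × V)) : Prop :=
  ∀ e ∈ F, e.1 ≠ e.2

/-- The edge set `F` contains a directed cycle. -/
def HasDirectedCycle (F : Finset (V × V)) : Prop :=
  ∃ v : V, Relation.TransGen (fun a b => (a, b) ∈ F) v v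

/-- The Laplacian matrix `A_k` of the labeled digraph `(V, F, k)`:
`(A_k)_{i,j} = k_{j→i}` if `(j→i) ∈ F`, `(A_k)_{i,i} = -∑_{(i→j)∈F} k_{i→j}`, and `0` otherwise. -/
noncomputable def kLaplacian [Fintype V] [DecidableEq V]
    (F : Finset (V × V)) (k : V × V → ℝ) : Matrix V V ℝ :=
  Matrix.of fun i j =>
    if i = j then -(∑ e ∈ F.filter (fun e => e.1 = i), k e)
    else if (j, i) ∈ F then k (j, i) else 0

/-- `T` is a directed spanning tree of the strongly connected digraph `E`, rooted at `i`
and directed towards the root: no directed cycle, and every vertex except `i`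
is the source of exactly one edge. -/
def IsSpanningTreeTo [DecidableEq V] (E : Finset (V × V)) (i : V)
    (T : Finset (V × V)) : Prop :=
  T ⊆ E ∧ ¬ HasDirectedCycle T ∧
    ∀ j : V, j ≠ i → (T.filter (fun e => e.1 = j)).card = 1

open scoped Classical in
/-- The tree constant `(K_k)_i = ∑_{T ∈ T_i} ∏_{(j→j')∈T} k_{j→j'}`. -/
noncomputable def treeConst [Fintype V] [DecidableEq V]
    (E : Finset (V × V)) (k : V × V → ℝ) (i : V) : ℝ :=
  ∑ T ∈ E.powerset.filter (fun T => IsSpanningTreeTo E i T), ∏ e ∈ T, k e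

/-- The incidence matrix of the digraph with edge set `F`: in the column of edge `(j→j')`,
entry `-1` in row `j`, entry `+1` in row `j'`, and `0` elsewhere. -/
noncomputable def incidence [DecidableEq V] (F : Finset (V × V)) :
    Matrix V {e : V × V // e ∈ F} ℝ :=
  Matrix.of fun i e =>
    (if (e : V × V).2 = i then (1 : ℝ) else 0) - (if (e : V × V).1 = i then (1 : ℝ) else 0)

/-- Every connected component of the digraph is strongly connected: whenever `j` is reachable
from `i` in the underlying undirected graph, it is reachable by a directed path. -/
def WeaklyReversible {V : Type*} (F : Finset (V × V)) : Prop :=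
  ∀ i j : V, uReach F i j → dReach F i j

/-- The underlying undirected simple graph of the digraph with edge set `F`. -/
def toSimpleGraph {V : Type*} (F : Finset (V × V)) : SimpleGraph V :=
  SimpleGraph.fromRel fun a b => (a, b) ∈ F

/-- `F` is an auxiliary digraph for the digraph `E`: its connected components are directed
trees on the vertex sets of the connected components of `E`. That is, `F` has no self-loops
and no pair of opposite edges, its underlying undirected graph is acyclic (a forest), and
its connected components coincide with those of `E`. -/
def IsAuxiliary {V : Type*} (E F : Finset (V × V)) : Prop :=
  NoSelfLoops F ∧ (∀ a b : V, (a, b) ∈ F → (b, a) ∉ F) ∧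
    (toSimpleGraph F).IsAcyclic ∧ (∀ i j : V, uReach F i j ↔ uReach E i j)

/-- `F` is a chain graph for `E`: an auxiliary digraph each of whose components is a chain
`i_1 → i_2 → … → i_m` on the corresponding component of `E`; equivalently, an auxiliary
digraph in which every vertex has out-degree at most one and in-degree at most one. -/
def IsChainGraphOn {V : Type*} [DecidableEq V] (E F : Finset (V × V)) : Prop :=
  IsAuxiliary E F ∧ (∀ v : V, (F.filter (fun e => e.1 = v)).card ≤ 1) ∧
    (∀ v : V, (F.filter (fun e => e.2 = v)).card ≤ 1)

/-- `F` is a star graph for `E`: an auxiliary digraph each of whose components is a star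
`i_1 → i_m, …, i_{m-1} → i_m` on the corresponding component of `E`; equivalently, an
auxiliary digraph in which all edges of one component share the same target (the root). -/
def IsStarGraphOn {V : Type*} (E F : Finset (V × V)) : Prop :=
  IsAuxiliary E F ∧ ∀ e ∈ F, ∀ e' ∈ F, uReach F e.2 e'.2 → e.2 = e'.2

/-- `T` is a directed spanning tree, rooted at `i` and directed towards the root, of the
connected component of `i` in the digraph `E`: no directed cycle, every vertex of the
component except `i` is the source of exactly one edge, and vertices outside the component
are sources of no edge. -/
def IsCompSpanningTreeTo {V : Type*} [DecidableEq V] (E : Finset (V × V)) (i : V)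
    (T : Finset (V × V)) : Prop :=
  T ⊆ E ∧ ¬ HasDirectedCycle T ∧
    (∀ j : V, j ≠ i → uReach E j i → (T.filter (fun e => e.1 = j)).card = 1) ∧
    (∀ j : V, ¬ uReach E j i → (T.filter (fun e => e.1 = j)).card = 0)

open scoped Classical in
/-- The tree constants, given componentwise: on each component `V^λ`,
`(K_k)_i = ∑_{T ∈ T_i} ∏_{(j→j')∈T} k_{j→j'}` with `T_i` the set of directed spanning trees
of the component rooted at `i`, directed towards the root. -/
noncomputable def treeConstM {V : Type*} [Fintype V] [DecidableEq V]
    (E : Finset (V × V)) (k : V × V → ℝ) (i : V) : ℝ :=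
  ∑ T ∈ E.powerset.filter (fun T => IsCompSpanningTreeTo E i T), ∏ e ∈ T, k e

/-- The (generalized) monomial `x^{y(i)} = ∏_j x_j^{(y(i))_j}` (real exponentiation). -/
noncomputable def monomial {V : Type*} [Fintype V] {n : ℕ}
    (y : V → Fin n → ℝ) (x : Fin n → ℝ) (i : V) : ℝ :=
  ∏ j : Fin n, x j ^ y i j

/-- The matrix `Y ∈ ℝ^{n × V}` whose columns are the complexes `y(i)`. -/
noncomputable def complexMatrix {V : Type*} {n : ℕ} (y : V → Fin n → ℝ) :
    Matrix (Fin n) V ℝ :=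
  Matrix.of fun j i => y i j

/-- The mass-action vector field `f_k(x) = Y A_k x^Y`. -/
noncomputable def massActionField {V : Type*} [Fintype V] [DecidableEq V] {n : ℕ}
    (E : Finset (V × V)) (k : V × V → ℝ) (y : V → Fin n → ℝ) (x : Fin n → ℝ) :
    Fin n → ℝ :=
  (complexMatrix y).mulVec ((kLaplacian E k).mulVec (monomial y x))


section Aux

lemma lap_mulVec {V : Type*} [Fintype V] [DecidableEq V]
    (E : Finset (V × V)) (hloop : NoSelfLoops E) (k : V × V → ℝ) (g : V → ℝ) (i : V) :
    (kLaplacian E k).mulVec g i =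
      (∑ e ∈ E.filter (fun e => e.2 = i), k e * g e.1)
        - (∑ e ∈ E.filter (fun e => e.1 = i), k e) * g i := by
  classical
  have key : ∀ j : V, (kLaplacian E k) i j * g j =
      (if j = i then -((∑ e ∈ E.filter (fun e => e.1 = i), k e) * g i) else 0)
      + (if (j, i) ∈ E then k (j, i) * g j else 0) := by
    intro j
    by_cases h : i = j
    · subst h
      have hii : (i, i) ∉ E := fun hm => hloop _ hm rfl
      simp [kLaplacian, hii]
    · simp [kLaplacian, h, Ne.symm h, ite_mul]
  have h1 : (kLaplacian E k).mulVec g i = ∑ j : V, (kLaplacian E k) i j * g j := rfl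
  rw [h1]
  have h2 : ∑ j : V, (if (j, i) ∈ E then k (j, i) * g j else 0)
      = ∑ e ∈ E.filter (fun e => e.2 = i), k e * g e.1 := by
    rw [← Finset.sum_filter]
    refine Finset.sum_bij' (fun j _ => (j, i)) (fun e _ => e.1) ?_ ?_ ?_ ?_ ?_
    · intro a ha
      simp only [Finset.mem_filter, Finset.mem_univ, true_and] at ha
      exact Finset.mem_filter.mpr ⟨ha, rfl⟩
    · intro e he
      obtain ⟨h1, h2⟩ := Finset.mem_filter.mp he
      simp only [Finset.mem_filter, Finset.mem_univ, true_and]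
      have : (e.1, e.2) ∈ E := by simpa using h1
      rwa [h2] at this
    · intro a ha; rfl
    · intro e he
      obtain ⟨h1, h2⟩ := Finset.mem_filter.mp he
      exact Prod.ext rfl h2.symm
    · intro a ha; rfl
  simp_rw [key]
  rw [Finset.sum_add_distrib, h2, Finset.sum_ite_eq' Finset.univ i
    (fun _ => -((∑ e ∈ E.filter (fun e => e.1 = i), k e) * g i))]
  simp
  ring

lemma balance_global {V : Type*} [Fintype V] [DecidableEq V]
    (E : Finset (V × V)) (k : V × V → ℝ) (u φ : V → ℝ)
    (hbal : ∀ i : V, ∑ e ∈ E.filter (fun e => e.2 = i), k e * u e.1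
        = (∑ e ∈ E.filter (fun e => e.1 = i), k e) * u i) :
    ∑ e ∈ E, k e * u e.1 * φ e.2 = ∑ e ∈ E, k e * u e.1 * φ e.1 := by
  have l2 : ∑ i : V, ∑ e ∈ E.filter (fun e => e.2 = i), k e * u e.1 * φ e.2
      = ∑ e ∈ E, k e * u e.1 * φ e.2 :=
    Finset.sum_fiberwise_of_maps_to (fun e _ => Finset.mem_univ e.2) _
  have l1 : ∑ i : V, ∑ e ∈ E.filter (fun e => e.1 = i), k e * u e.1 * φ e.1
      = ∑ e ∈ E, k e * u e.1 * φ e.1 :=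
    Finset.sum_fiberwise_of_maps_to (fun e _ => Finset.mem_univ e.1) _
  rw [← l1, ← l2]
  apply Finset.sum_congr rfl
  intro i _
  have r2 : ∑ e ∈ E.filter (fun e => e.2 = i), k e * u e.1 * φ e.2
      = (∑ e ∈ E.filter (fun e => e.2 = i), k e * u e.1) * φ i := by
    rw [Finset.sum_mul]
    refine Finset.sum_congr rfl fun e he => ?_
    rw [(Finset.mem_filter.mp he).2]
  have r1 : ∑ e ∈ E.filter (fun e => e.1 = i), k e * u e.1 * φ e.1
      = ((∑ e ∈ E.filter (fun e => e.1 = i), k e) * u i) * φ i := by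
    rw [Finset.sum_mul, Finset.sum_mul]
    refine Finset.sum_congr rfl fun e he => ?_
    rw [(Finset.mem_filter.mp he).2]
  rw [r2, r1, hbal i]

lemma monomial_pos {V : Type*} [Fintype V] {n : ℕ}
    (y : V → Fin n → ℝ) (x : Fin n → ℝ) (hx : ∀ j, 0 < x j) (i : V) :
    0 < monomial y x i :=
  Finset.prod_pos fun j _ => Real.rpow_pos_of_pos (hx j) _

lemma monomial_mul_exp {V : Type*} [Fintype V] {n : ℕ}
    (y : V → Fin n → ℝ) (xs : Fin n → ℝ) (hxs : ∀ j, 0 < xs j)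
    (v : Fin n → ℝ) (i : V) :
    monomial y (fun j => xs j * Real.exp (v j)) i
      = monomial y xs i * Real.exp (∑ j, y i j * v j) := by
  unfold monomial
  rw [Real.exp_sum, ← Finset.prod_mul_distrib]
  refine Finset.prod_congr rfl fun j _ => ?_
  rw [Real.mul_rpow (hxs j).le (Real.exp_pos _).le]
  congr 1
  rw [Real.rpow_def_of_pos (Real.exp_pos _), Real.log_exp, mul_comm]

lemma YI_apply {V : Type*} [Fintype V] [DecidableEq V] {n : ℕ}
    (E : Finset (V × V)) (y : V → Fin n → ℝ) (j : Fin n) (e : {e : V × V // e ∈ E}) :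
    (complexMatrix y * incidence E) j e = y (e : V × V).2 j - y (e : V × V).1 j := by
  rw [Matrix.mul_apply]
  simp [complexMatrix, incidence, mul_sub, Finset.sum_sub_distrib, mul_ite]

end Aux

/-- For a weakly reversible mass-action system with positive complex-balanced equilibrium
`x*`, the set of all positive complex-balanced equilibria equals
`{ x* ∘ e^v : v ∈ S^⊥ }`, where `S = im(Y I_E)` is the stoichiometric subspace. -/
theorem complex_balanced_equilibria_monomial_parametrization
    {V : Type*} [Fintype V] [DecidableEq V] {n : ℕ}
    (E : Finset (V × V)) (hloop : NoSelfLoops E)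
    (k : V × V → ℝ) (hk : ∀ e ∈ E, 0 < k e)
    (y : V → Fin n → ℝ) (hyinj : Function.Injective y) (hynn : ∀ i j, 0 ≤ y i j)
    (hwr : WeaklyReversible E)
    (xs : Fin n → ℝ) (hxs : ∀ j, 0 < xs j)
    (hcb : (kLaplacian E k).mulVec (monomial y xs) = 0) :
    {x : Fin n → ℝ | (∀ j, 0 < x j) ∧ (kLaplacian E k).mulVec (monomial y x) = 0} =
      {x : Fin n → ℝ | ∃ v : Fin n → ℝ,
        (∀ s ∈ LinearMap.range (complexMatrix y * incidence E).mulVecLin,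
          ∑ j : Fin n, v j * s j = 0) ∧
        x = fun j => xs j * Real.exp (v j)} := by
  classical
  -- balance of the reference equilibrium, in edge-sum form
  have hbalw : ∀ i : V, ∑ e ∈ E.filter (fun e => e.2 = i), k e * monomial y xs e.1
      = (∑ e ∈ E.filter (fun e => e.1 = i), k e) * monomial y xs i := by
    intro i
    have h := congrFun hcb i
    rw [lap_mulVec E hloop] at h
    simp only [Pi.zero_apply] at h
    linarith
  have hw : ∀ i, 0 < monomial y xs i := monomial_pos y xs hxs
  ext x
  simp only [Set.mem_setOf_eq]
  constructor
  · rintro ⟨hxpos, hxcb⟩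
    set v : Fin n → ℝ := fun j => Real.log (x j) - Real.log (xs j) with hv
    have hxeq : x = fun j => xs j * Real.exp (v j) := by
      funext j
      rw [hv]
      simp only
      rw [Real.exp_sub, Real.exp_log (hxpos j), Real.exp_log (hxs j),
        mul_comm (xs j) (x j / xs j), div_mul_cancel₀ _ (hxs j).ne']
    set z : V → ℝ := fun i => ∑ j, y i j * v j with hz
    have hmx : ∀ i, monomial y x i = monomial y xs i * Real.exp (z i) := by
      intro i
      rw [hxeq]
      exact monomial_mul_exp y xs hxs v i
    -- balance of x in edge-sum form
    have hbalx : ∀ i : V,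
        ∑ e ∈ E.filter (fun e => e.2 = i), k e * (monomial y xs e.1 * Real.exp (z e.1))
        = (∑ e ∈ E.filter (fun e => e.1 = i), k e) * (monomial y xs i * Real.exp (z i)) := by
      intro i
      have h := congrFun hxcb i
      rw [lap_mulVec E hloop] at h
      simp only [Pi.zero_apply] at h
      simp_rw [hmx] at h
      linarith
    have I1 : ∑ e ∈ E, k e * monomial y xs e.1 * Real.exp (z e.2)
        = ∑ e ∈ E, k e * monomial y xs e.1 * Real.exp (z e.1) :=
      balance_global E k (monomial y xs) (fun i => Real.exp (z i)) hbalw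
    have I2 : ∑ e ∈ E, k e * (monomial y xs e.1 * Real.exp (z e.1)) * z e.2
        = ∑ e ∈ E, k e * (monomial y xs e.1 * Real.exp (z e.1)) * z e.1 :=
      balance_global E k (fun i => monomial y xs i * Real.exp (z i)) z hbalx
    have hsum : ∑ e ∈ E, k e * monomial y xs e.1 *
        (Real.exp (z e.2) - Real.exp (z e.1) - Real.exp (z e.1) * (z e.2 - z e.1)) = 0 := by
      have expand : ∀ e ∈ E, k e * monomial y xs e.1 *
          (Real.exp (z e.2) - Real.exp (z e.1) - Real.exp (z e.1) * (z e.2 - z e.1))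
          = (k e * monomial y xs e.1 * Real.exp (z e.2)
              - k e * monomial y xs e.1 * Real.exp (z e.1))
            - (k e * (monomial y xs e.1 * Real.exp (z e.1)) * z e.2
              - k e * (monomial y xs e.1 * Real.exp (z e.1)) * z e.1) := by
        intro e _; ring
      rw [Finset.sum_congr rfl expand, Finset.sum_sub_distrib, Finset.sum_sub_distrib,
        Finset.sum_sub_distrib, I1, I2]
      ring
    have hnonneg : ∀ e ∈ E, 0 ≤ k e * monomial y xs e.1 *
        (Real.exp (z e.2) - Real.exp (z e.1) - Real.exp (z e.1) * (z e.2 - z e.1)) := by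
      intro e he
      have hb : 0 < k e * monomial y xs e.1 := mul_pos (hk e he) (hw e.1)
      have hkey : Real.exp (z e.2) = Real.exp (z e.1) * Real.exp (z e.2 - z e.1) := by
        rw [← Real.exp_add]; ring_nf
      have hbr : 0 ≤ Real.exp (z e.2) - Real.exp (z e.1)
          - Real.exp (z e.1) * (z e.2 - z e.1) := by
        rw [hkey]
        nlinarith [Real.add_one_le_exp (z e.2 - z e.1), (Real.exp_pos (z e.1)).le]
      exact mul_nonneg hb.le hbr
    have hterm0 := (Finset.sum_eq_zero_iff_of_nonneg hnonneg).mp hsum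
    have hze : ∀ e ∈ E, z e.2 = z e.1 := by
      intro e he
      by_contra hne
      have ht : z e.2 - z e.1 ≠ 0 := sub_ne_zero.mpr hne
      have hlt := Real.add_one_lt_exp ht
      have h0 := hterm0 e he
      have hb : 0 < k e * monomial y xs e.1 := mul_pos (hk e he) (hw e.1)
      have hbr : Real.exp (z e.2) - Real.exp (z e.1)
          - Real.exp (z e.1) * (z e.2 - z e.1) = 0 :=
        (mul_eq_zero.mp h0).resolve_left hb.ne'
      have hkey : Real.exp (z e.2) = Real.exp (z e.1) * Real.exp (z e.2 - z e.1) := by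
        rw [← Real.exp_add]; ring_nf
      rw [hkey] at hbr
      nlinarith [Real.exp_pos (z e.1)]
    refine ⟨v, ?_, hxeq⟩
    rintro s ⟨u, rfl⟩
    have hstep : ∑ j : Fin n, v j * ((complexMatrix y * incidence E).mulVecLin u) j
        = ∑ e : {e : V × V // e ∈ E}, u e * (z (e : V × V).2 - z (e : V × V).1) := by
      simp only [Matrix.mulVecLin_apply, Matrix.mulVec, dotProduct]
      simp_rw [Finset.mul_sum]
      rw [Finset.sum_comm]
      refine Finset.sum_congr rfl fun e _ => ?_
      simp_rw [YI_apply, hz]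
      rw [← Finset.sum_sub_distrib, Finset.mul_sum]
      refine Finset.sum_congr rfl fun j _ => ?_
      ring
    rw [hstep]
    refine Finset.sum_eq_zero fun e _ => ?_
    rw [hze _ e.prop, sub_self, mul_zero]
  · rintro ⟨v, hperp, rfl⟩
    set z : V → ℝ := fun i => ∑ j, y i j * v j with hz
    have hze : ∀ e ∈ E, z e.2 = z e.1 := by
      intro e he
      have := hperp ((complexMatrix y * incidence E).mulVecLin
          (fun e' => if e' = (⟨e, he⟩ : {e : V × V // e ∈ E}) then 1 else 0))
        ⟨_, rfl⟩
      simp only [Matrix.mulVecLin_apply, Matrix.mulVec, dotProduct] at this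
      have hsimp : ∀ j : Fin n,
          ∑ e' : {e : V × V // e ∈ E}, (complexMatrix y * incidence E) j e' *
            (if e' = (⟨e, he⟩ : {e : V × V // e ∈ E}) then (1 : ℝ) else 0)
          = y e.2 j - y e.1 j := by
        intro j
        rw [Finset.sum_eq_single (⟨e, he⟩ : {e : V × V // e ∈ E})]
        · simp [YI_apply]
        · intro b _ hb; simp [hb]
        · intro h; exact absurd (Finset.mem_univ _) h
      simp_rw [hsimp] at this
      have : (∑ j, v j * y e.2 j) - ∑ j, v j * y e.1 j = 0 := by
        rw [← Finset.sum_sub_distrib]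
        rw [← this]
        exact Finset.sum_congr rfl fun j _ => by ring
      have hz2 : z e.2 = ∑ j, v j * y e.2 j := Finset.sum_congr rfl fun j _ => mul_comm _ _
      have hz1 : z e.1 = ∑ j, v j * y e.1 j := Finset.sum_congr rfl fun j _ => mul_comm _ _
      rw [hz2, hz1]
      linarith
    have hmx : ∀ i, monomial y (fun j => xs j * Real.exp (v j)) i
        = monomial y xs i * Real.exp (z i) := fun i => monomial_mul_exp y xs hxs v i
    refine ⟨fun j => mul_pos (hxs j) (Real.exp_pos _), ?_⟩
    funext i
    rw [lap_mulVec E hloop]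
    simp only [Pi.zero_apply]
    simp_rw [hmx]
    have hfil : ∑ e ∈ E.filter (fun e => e.2 = i), k e * (monomial y xs e.1 * Real.exp (z e.1))
        = Real.exp (z i) * ∑ e ∈ E.filter (fun e => e.2 = i), k e * monomial y xs e.1 := by
      rw [Finset.mul_sum]
      refine Finset.sum_congr rfl fun e he => ?_
      obtain ⟨h1, h2⟩ := Finset.mem_filter.mp he
      rw [← h2, ← hze e h1]
      ring
    rw [hfil, hbalw i]
    ring
end

section
/- Let (G_k,y) be a mass-action system that admits a positive complex-balanced equilibrium x* ∈ ℝ^n_{>0}. Then every positive equilibrium is complex-balanced: if x ∈ ℝ^n_{>0} satisfies f_k(x) = Y A_k x^Y = 0, then A_k x^Y = 0. -/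
open Matrix BigOperators Finset

variable {V : Type*}

section Aux

open Finset in
lemma lap_mulVec_apply {V : Type*} [Fintype V] [DecidableEq V]
    (E : Finset (V × V)) (hloop : NoSelfLoops E) (k : V × V → ℝ) (v : V → ℝ) (i : V) :
    (kLaplacian E k).mulVec v i
      = ∑ e ∈ E, k e * v e.1 * ((if e.2 = i then (1:ℝ) else 0) - (if e.1 = i then 1 else 0)) := by
  classical
  have h1 : (kLaplacian E k).mulVec v i
      = ∑ j : V, (if i = j then -(∑ e ∈ E.filter (fun e => e.1 = i), k e)
          else if (j, i) ∈ E then k (j, i) else 0) * v j := rfl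
  rw [h1]
  have h2 : ∀ j : V, (if i = j then -(∑ e ∈ E.filter (fun e => e.1 = i), k e)
          else if (j, i) ∈ E then k (j, i) else 0) * v j
      = (if i = j then -(∑ e ∈ E.filter (fun e => e.1 = i), k e) * v i else 0)
        + (if (j, i) ∈ E then k (j, i) * v j else 0) := by
    intro j
    by_cases hij : i = j
    · subst hij
      have hE : (i, i) ∉ E := fun h => hloop _ h rfl
      simp [hE]
    · simp [hij]
  simp only [h2, Finset.sum_add_distrib]
  have h3 : ∑ j : V, (if i = j then -(∑ e ∈ E.filter (fun e => e.1 = i), k e) * v i else 0)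
      = -(∑ e ∈ E.filter (fun e => e.1 = i), k e) * v i := by
    rw [Finset.sum_ite_eq]; simp
  have h4 : ∑ j : V, (if (j, i) ∈ E then k (j, i) * v j else 0)
      = ∑ e ∈ E, (if e.2 = i then k e * v e.1 else 0) := by
    have h5 : ∀ j : V, (if (j, i) ∈ E then k (j, i) * v j else 0)
        = ∑ e ∈ E, if e = (j, i) then k e * v e.1 else 0 := by
      intro j
      rw [Finset.sum_ite_eq' E (j, i) (fun e => k e * v e.1)]
    simp only [h5]
    rw [Finset.sum_comm]
    refine Finset.sum_congr rfl fun e _ => ?_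
    by_cases h : e.2 = i
    · obtain ⟨e1, e2⟩ := e
      simp only at h
      subst h
      simp [Prod.ext_iff, Finset.sum_ite_eq]
    · simp [Prod.ext_iff, h]
  rw [h3, h4]
  have h6 : ∑ e ∈ E, k e * v e.1 * ((if e.2 = i then (1:ℝ) else 0) - (if e.1 = i then 1 else 0))
      = (∑ e ∈ E, (if e.2 = i then k e * v e.1 else 0))
        - ∑ e ∈ E, (if e.1 = i then k e * v e.1 else 0) := by
    rw [← Finset.sum_sub_distrib]
    refine Finset.sum_congr rfl fun e _ => ?_
    by_cases h1' : e.1 = i <;> by_cases h2' : e.2 = i <;> simp [h1', h2'] <;> ring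
  rw [h6]
  have h7 : ∑ e ∈ E, (if e.1 = i then k e * v e.1 else 0)
      = (∑ e ∈ E.filter (fun e => e.1 = i), k e) * v i := by
    rw [← Finset.sum_filter, Finset.sum_mul]
    refine Finset.sum_congr rfl fun e he => ?_
    rw [(Finset.mem_filter.mp he).2]
  rw [h7]
  ring

open Finset in
lemma lap_pairing {V : Type*} [Fintype V] [DecidableEq V]
    (E : Finset (V × V)) (hloop : NoSelfLoops E) (k : V × V → ℝ) (w v : V → ℝ) :
    ∑ i : V, w i * (kLaplacian E k).mulVec v i
      = ∑ e ∈ E, k e * v e.1 * (w e.2 - w e.1) := by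
  simp only [lap_mulVec_apply E hloop k v]
  simp only [Finset.mul_sum]
  rw [Finset.sum_comm]
  refine Finset.sum_congr rfl fun e _ => ?_
  have h : ∀ i : V, w i * (k e * v e.1 * ((if e.2 = i then (1:ℝ) else 0) - (if e.1 = i then 1 else 0)))
      = k e * v e.1 * ((if e.2 = i then w i else 0) - (if e.1 = i then w i else 0)) := by
    intro i; split_ifs <;> ring
  simp only [h]
  rw [← Finset.mul_sum, Finset.sum_sub_distrib, Finset.sum_ite_eq, Finset.sum_ite_eq]
  simp

end Aux

/-- If a mass-action system admits a positive complex-balanced equilibrium, then every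
positive equilibrium is complex-balanced: `f_k(x) = Y A_k x^Y = 0` implies `A_k x^Y = 0`. -/
theorem positive_equilibria_are_complex_balanced
    {V : Type*} [Fintype V] [DecidableEq V] {n : ℕ}
    (E : Finset (V × V)) (hloop : NoSelfLoops E)
    (k : V × V → ℝ) (hk : ∀ e ∈ E, 0 < k e)
    (y : V → Fin n → ℝ) (hyinj : Function.Injective y) (hynn : ∀ i j, 0 ≤ y i j)
    (xs : Fin n → ℝ) (hxs : ∀ j, 0 < xs j)
    (hcb : (kLaplacian E k).mulVec (monomial y xs) = 0)
    (x : Fin n → ℝ) (hx : ∀ j, 0 < x j)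
    (heq : massActionField E k y x = 0) :
    (kLaplacian E k).mulVec (monomial y x) = 0 := by
  classical
  set μ : Fin n → ℝ := fun j => Real.log (x j) - Real.log (xs j) with hμ
  set a : V → ℝ := fun i => ∑ j : Fin n, y i j * μ j with ha
  have hqpos : ∀ i, 0 < monomial y xs i := fun i =>
    Finset.prod_pos fun j _ => Real.rpow_pos_of_pos (hxs j) _
  have hm : ∀ i, monomial y x i = monomial y xs i * Real.exp (a i) := by
    intro i
    rw [ha]
    unfold monomial
    rw [Real.exp_sum, ← Finset.prod_mul_distrib]
    refine Finset.prod_congr rfl fun j _ => ?_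
    rw [Real.rpow_def_of_pos (hx j), Real.rpow_def_of_pos (hxs j), ← Real.exp_add]
    congr 1
    simp only [hμ]
    ring
  -- consequence of complex balancing at xs paired with exp ∘ a
  have h1 : ∑ e ∈ E, k e * monomial y xs e.1 * (Real.exp (a e.2) - Real.exp (a e.1)) = 0 := by
    rw [← lap_pairing E hloop k (fun i => Real.exp (a i)) (monomial y xs), hcb]
    simp
  -- consequence of f_k(x) = 0 paired with μ
  have h2 : ∑ e ∈ E, k e * monomial y x e.1 * (a e.2 - a e.1) = 0 := by
    rw [← lap_pairing E hloop k a (monomial y x)]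
    have h2b : ∀ g : V → ℝ, ∑ j : Fin n, μ j * (complexMatrix y).mulVec g j
        = ∑ i : V, a i * g i := by
      intro g
      simp only [Matrix.mulVec, dotProduct, complexMatrix, Matrix.of_apply,
        Finset.mul_sum]
      rw [Finset.sum_comm]
      refine Finset.sum_congr rfl fun i _ => ?_
      rw [ha]
      rw [Finset.sum_mul]
      refine Finset.sum_congr rfl fun j _ => ?_
      ring
    rw [← h2b ((kLaplacian E k).mulVec (monomial y x))]
    rw [show (complexMatrix y).mulVec ((kLaplacian E k).mulVec (monomial y x)) = 0 from heq]
    simp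
  -- the convexity gap sums to zero
  have key : ∑ e ∈ E, k e * monomial y xs e.1
      * (Real.exp (a e.2) - Real.exp (a e.1) - Real.exp (a e.1) * (a e.2 - a e.1)) = 0 := by
    have hsplit : ∑ e ∈ E, k e * monomial y xs e.1
        * (Real.exp (a e.2) - Real.exp (a e.1) - Real.exp (a e.1) * (a e.2 - a e.1))
        = (∑ e ∈ E, k e * monomial y xs e.1 * (Real.exp (a e.2) - Real.exp (a e.1)))
          - ∑ e ∈ E, k e * monomial y x e.1 * (a e.2 - a e.1) := by
      rw [← Finset.sum_sub_distrib]
      refine Finset.sum_congr rfl fun e _ => ?_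
      rw [hm e.1]
      ring
    rw [hsplit, h1, h2, sub_zero]
  have nonneg : ∀ e ∈ E, 0 ≤ k e * monomial y xs e.1
      * (Real.exp (a e.2) - Real.exp (a e.1) - Real.exp (a e.1) * (a e.2 - a e.1)) := by
    intro e he
    have hgap : 0 ≤ Real.exp (a e.2) - Real.exp (a e.1) - Real.exp (a e.1) * (a e.2 - a e.1) := by
      have h := Real.add_one_le_exp (a e.2 - a e.1)
      have h' := mul_le_mul_of_nonneg_left h (Real.exp_pos (a e.1)).le
      rw [← Real.exp_add] at h'
      have : a e.1 + (a e.2 - a e.1) = a e.2 := by ring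
      rw [this] at h'
      nlinarith
    exact mul_nonneg (mul_nonneg (hk e he).le (hqpos e.1).le) hgap
  have hedge : ∀ e ∈ E, a e.2 = a e.1 := by
    intro e he
    have hz := (Finset.sum_eq_zero_iff_of_nonneg nonneg).mp key e he
    have hgap : Real.exp (a e.2) - Real.exp (a e.1) - Real.exp (a e.1) * (a e.2 - a e.1) = 0 := by
      have hkp : 0 < k e * monomial y xs e.1 := mul_pos (hk e he) (hqpos e.1)
      rcases mul_eq_zero.mp hz with h | h
      · exact absurd h hkp.ne'
      · exact h
    by_contra hne
    have hd : a e.2 - a e.1 ≠ 0 := fun h => hne (by linarith [sub_eq_zero.mp h])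
    have h := Real.add_one_lt_exp hd
    have h' := mul_lt_mul_of_pos_left h (Real.exp_pos (a e.1))
    rw [← Real.exp_add] at h'
    have he' : a e.1 + (a e.2 - a e.1) = a e.2 := by ring
    rw [he'] at h'
    nlinarith
  funext i
  rw [lap_mulVec_apply E hloop k _ i]
  have hqi : ∑ e ∈ E, k e * monomial y xs e.1
      * ((if e.2 = i then (1:ℝ) else 0) - (if e.1 = i then 1 else 0)) = 0 := by
    rw [← lap_mulVec_apply E hloop k _ i, hcb]
    rfl
  have hfinal : ∑ e ∈ E, k e * monomial y x e.1
      * ((if e.2 = i then (1:ℝ) else 0) - (if e.1 = i then 1 else 0))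
      = Real.exp (a i) * ∑ e ∈ E, k e * monomial y xs e.1
        * ((if e.2 = i then (1:ℝ) else 0) - (if e.1 = i then 1 else 0)) := by
    rw [Finset.mul_sum]
    refine Finset.sum_congr rfl fun e he => ?_
    rw [hm e.1]
    by_cases h1' : e.1 = i
    · rw [h1']
      ring
    · by_cases h2' : e.2 = i
      · have : a e.1 = a i := by rw [← hedge e he, h2']
        rw [this]
        ring
      · simp [h1', h2']
  rw [hfinal, hqi, mul_zero]
  simp
end
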